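/- Let (Ω, F, P) be a probability space with filtration (F_k)_{k≥0}. Let c₀ ≥ 1, ρ > 0, c̃ > 0, positive constants c₁, …, c₆, and set c₇ = 3c₁³ + (c₂ + c₄)²/c₆ + 4c₁(c₂ + c₄). Let σ > 0 satisfy σ ≤ max(c₁, c₆, (c₂ + c₄)^{1/2})⁻¹ and let κ ∈ [0, 1]. Let (X_k)_{k≥1} be adapted random variables with E(X_k | F_{k−1}) = σ²·B_{k−1} and E(X_k² | F_{k−1}) = σ²·A_{k−1}, where A_k and B_k are F_k-measurable with |A_k| ≤ 9c₀ρ³, |B_k| ≤ 4ρ², and |X_k| ≤ c₁σ almost surely. Let (F_k)_{k≥0} and (G_k)_{k≥0} be adapted real processes such that, with ΔF_k = F_k − F_{k−1} and ΔG_k = G_k − G_{k−1}, one has |B_k − ΔF_k − c̃| ≤ c₃σ, |A_k − ΔG_k − c̃| ≤ c₅σ, |ΔF_k| ≤ c₂ and |ΔG_k| ≤ c₄. Let δ satisfy (2σ/c̃)·(2κ/σ³ + c₃ + c₅ + 2c₇) ≤ δ ≤ 1/2. Then the process Π_k = exp(σ²(1 − δ)(F_{k−1} − (1 − δ/2)G_{k−1}))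 · ∏_{i=1}^{k} (e^{−κ}(1 + X_i))^{δ−1}, k ≥ 1, is a supermartingale with respect to (F_k): E(Π_{k+1} | F_k) ≤ Π_k for all k ≥ 1. -/

import Mathlib

open MeasureTheory Finset

set_option maxHeartbeats 1000000

lemma log_taylor_bd {u : ℝ} (hu : |u| ≤ 1/2) :
    |Real.log (1+u) - (u - u^2/2)| ≤ 2*|u|^3 := by
  have h := Real.abs_log_sub_add_sum_range_le (x := -u) (by rw [abs_neg]; linarith) 2
  simp only [Finset.sum_range_succ, Finset.sum_range_zero] at h
  rw [show (1 : ℝ) - -u = 1 + u by ring, abs_neg] at h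
  norm_num at h
  rw [show Real.log (1+u) - (u - u^2/2) = -u + u^2/2 + Real.log (1+u) from by ring]
  refine h.trans ?_
  rw [div_le_iff₀ (by linarith [abs_nonneg u])]
  nlinarith [pow_nonneg (abs_nonneg u) 3, mul_le_mul_of_nonneg_left hu
    (pow_nonneg (abs_nonneg u) 3)]

lemma exp_taylor_bd {z : ℝ} (hz : |z| ≤ 1) :
    Real.exp z ≤ 1 + z + z^2/2 + (2/9)*|z|^3 := by
  have h := Real.exp_bound hz (n := 3) (by norm_num)
  simp only [Finset.sum_range_succ, Finset.sum_range_zero] at h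
  have hfac : ((Nat.factorial 3 : ℕ) : ℝ) = 6 := by norm_num [Nat.factorial]
  rw [hfac] at h
  norm_num at h
  have h1 := (abs_sub_le_iff.1 h).1
  nlinarith [h1, pow_nonneg (abs_nonneg z) 3]

lemma key_alg {u δ a r : ℝ} (ha0 : 0 ≤ a) (ha : a ≤ 1/12) (hua' : -a ≤ u) (hua : u ≤ a)
    (hu2 : u^2 ≤ a^2) (hrr : |r| ≤ 2*a^3) (hδ0 : 0 ≤ δ) (hδ : δ ≤ 1/2) :
    1 + (u - u^2/2 + r)*(δ-1) + ((u - u^2/2 + r)*(δ-1))^2/2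
      + (2/9)*|(u - u^2/2 + r)*(δ-1)|^3
      ≤ 1 - (1-δ)*u + (1-δ)*(2-δ)/2*u^2 + 3*a^3 := by
  have hr := abs_le.mp hrr
  have hsq : a^2 ≤ a/12 := by nlinarith
  have hcb : a^3 ≤ a/144 := by nlinarith
  have ha3 : 0 ≤ a^3 := pow_nonneg ha0 3
  have ha4 : a^4 ≤ a^3/12 := by nlinarith
  have ha5 : a^5 ≤ a^3/144 := by nlinarith [ha4]
  have ha6 : a^6 ≤ a^3/1728 := by nlinarith [ha5]
  set L := u - u^2/2 + r with hLdef
  have hLbd : |L| ≤ (11/10)*a := by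
    rw [abs_le]; constructor <;> (rw [hLdef]; nlinarith [sq_nonneg u])
  set z := L * (δ - 1) with hzdef
  have haL := abs_le.mp hLbd
  have hzabs : |z| ≤ (11/10)*a := by
    rw [hzdef, abs_mul, abs_of_nonpos (by linarith : δ - 1 ≤ 0)]
    nlinarith [abs_nonneg L, hLbd]
  have hzc : |z|^3 ≤ (11/10*a)^3 := pow_le_pow_left₀ (abs_nonneg _) hzabs 3
  have hzc' : (2/9)*|z|^3 ≤ (3/10)*a^3 := by nlinarith [hzc]
  set D := L^2 - u^2 with hDdef
  have hexpand : D = -u^3 + 2*(u*r) + u^4/4 - (u^2*r) + r^2 := by rw [hDdef, hLdef]; ring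
  have hu3 : -u^3 ≤ a^3 := by nlinarith [sq_nonneg (u+a), sq_nonneg (u-a)]
  have hu4 : u^4 ≤ a^4 := by nlinarith [hu2, sq_nonneg u]
  have hur : u*r ≤ 2*a^4 := by
    have h2 : |u*r| ≤ a*(2*a^3) := by
      rw [abs_mul]
      exact mul_le_mul (abs_le.mpr ⟨hua', hua⟩) hrr (abs_nonneg r) ha0
    have := (abs_le.mp h2).2; nlinarith
  have hu2r : -(u^2*r) ≤ 2*a^5 := by
    have h1' : u^2*(-r) ≤ u^2*(2*a^3) := mul_le_mul_of_nonneg_left (by linarith) (sq_nonneg u)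
    nlinarith [mul_le_mul_of_nonneg_right hu2 (by nlinarith : (0:ℝ) ≤ 2*a^3)]
  have hr2 : r^2 ≤ 4*a^6 := by nlinarith
  have hD : D ≤ (7/5)*a^3 := by rw [hexpand]; linarith
  have hz2 : z^2 = (1-δ)^2*(u^2 + D) := by rw [hzdef, hDdef]; ring
  have hz2' : z^2/2 ≤ (1-δ)^2*u^2/2 + (7/10)*a^3 := by
    rcases le_or_gt D 0 with hD0 | hD0
    · nlinarith [mul_nonpos_of_nonneg_of_nonpos (sq_nonneg (1-δ)) hD0]
    · nlinarith [mul_le_mul_of_nonneg_left hD (sq_nonneg (1-δ)),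
        mul_le_mul_of_nonneg_right (show (1-δ)^2 ≤ 1 by nlinarith) (le_of_lt hD0)]
  have hzeq : z = -((1-δ)*u) + (1-δ)*(u^2/2) - (1-δ)*r := by rw [hzdef, hLdef]; ring
  have h6 : -((1-δ)*r) ≤ 2*a^3 := by
    have h6' : (1-δ)*(-r) ≤ (1-δ)*(2*a^3) :=
      mul_le_mul_of_nonneg_left (by linarith) (by linarith)
    have h6'' : 0 ≤ δ*a^3 := mul_nonneg hδ0 ha3
    linarith
  linarith [hz2', hzeq, h6, hzc']

lemma key_pointwise {u δ : ℝ} (hu : |u| ≤ 1/12) (hδ0 : 0 ≤ δ) (hδ : δ ≤ 1/2) :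
    (1+u) ^ (δ - 1) ≤ 1 - (1-δ)*u + (1-δ)*(2-δ)/2*u^2 + 3*|u|^3 := by
  have hau := abs_le.mp hu
  have h1 : (0:ℝ) < 1 + u := by linarith
  rw [Real.rpow_def_of_pos h1]
  have hlog : |Real.log (1+u) - (u - u^2/2)| ≤ 2*|u|^3 := log_taylor_bd (by linarith)
  have hLeq : Real.log (1+u) = u - u^2/2 + (Real.log (1+u) - (u - u^2/2)) := by ring
  have hkey := key_alg (abs_nonneg u) hu (neg_abs_le u) (le_abs_self u)
    (by rw [← sq_abs]) hlog hδ0 hδ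
  rw [← hLeq] at hkey
  refine le_trans (le_trans (exp_taylor_bd ?_) hkey) le_rfl
  rw [abs_mul, abs_of_nonpos (by linarith : δ - 1 ≤ 0)]
  have hL2 := abs_le.mp hlog
  have hL3 : |Real.log (1+u)| ≤ (11/10)*|u| := by
    rw [abs_le]
    have h2 : u^2 ≤ |u|^2 := by rw [sq_abs]
    have h3 : |u|^2 ≤ |u|/12 := by nlinarith [abs_nonneg u]
    have h4 : |u|^3 ≤ |u|/144 := by nlinarith [abs_nonneg u, h3]
    constructor <;> nlinarith [le_abs_self u, neg_abs_le u]
  nlinarith [abs_nonneg (Real.log (1+u)), abs_nonneg u]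


/-- The process `Π_k = exp(σ²(1−δ)(F_{k−1} − (1−δ/2)G_{k−1})) ∏_{i=1}^k (e^{−κ}(1+X_i))^{δ−1}`. -/
noncomputable def PiProc {Ω : Type*} (σ δ κ : ℝ) (F G X : ℕ → Ω → ℝ) (k : ℕ) (x : Ω) : ℝ :=
  Real.exp (σ ^ 2 * (1 - δ) * (F (k - 1) x - (1 - δ / 2) * G (k - 1) x))
    * ∏ i ∈ Finset.Icc 1 k, (Real.exp (-κ) * (1 + X i x)) ^ (δ - 1)

/-- The abstract supermartingale lemma: under the stated conditional moment and increment
hypotheses, with `c₇ = 3c₁³ + (c₂+c₄)²/c₆ + 4c₁(c₂+c₄)` and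
`(2σ/c̃)(2κ/σ³ + c₃ + c₅ + 2c₇) ≤ δ ≤ 1/2`, the process `Π_k` is a supermartingale:
`E(Π_{k+1} | F_k) ≤ Π_k` for all `k ≥ 1`. -/
theorem abstract_supermartingale_lemma
    {Ω : Type*} {m0 : MeasurableSpace Ω} (P : Measure Ω) [IsProbabilityMeasure P]
    (ℱ : Filtration ℕ m0)
    (c₀ ρ ctilde c₁ c₂ c₃ c₄ c₅ c₆ σ κ δ : ℝ)
    (hc₀ : 1 ≤ c₀) (hρ : 0 < ρ) (hctilde : 0 < ctilde)
    (hc₁ : 0 < c₁) (hc₂ : 0 < c₂) (hc₃ : 0 < c₃) (hc₄ : 0 < c₄) (hc₅ : 0 < c₅) (hc₆ : 0 < c₆)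
    (hσ0 : 0 < σ)
    (hσ : σ ≤ (max (max c₁ c₆) ((c₂ + c₄) ^ ((1 : ℝ) / 2)))⁻¹)
    (hκ : κ ∈ Set.Icc (0 : ℝ) 1)
    (X A B F G : ℕ → Ω → ℝ)
    (hXadp : ∀ k, 1 ≤ k → StronglyMeasurable[ℱ k] (X k))
    (hXint : ∀ k, 1 ≤ k → Integrable (X k) P)
    (hXsqint : ∀ k, 1 ≤ k → Integrable (fun x => X k x ^ 2) P)
    (hAadp : ∀ k, StronglyMeasurable[ℱ k] (A k))
    (hBadp : ∀ k, StronglyMeasurable[ℱ k] (B k))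
    (hFadp : ∀ k, StronglyMeasurable[ℱ k] (F k))
    (hGadp : ∀ k, StronglyMeasurable[ℱ k] (G k))
    (hcondB : ∀ k, 1 ≤ k → P[X k|ℱ (k - 1)] =ᵐ[P] fun x => σ ^ 2 * B (k - 1) x)
    (hcondA : ∀ k, 1 ≤ k → P[(fun x => X k x ^ 2)|ℱ (k - 1)] =ᵐ[P] fun x => σ ^ 2 * A (k - 1) x)
    (hAbd : ∀ k, ∀ᵐ x ∂P, |A k x| ≤ 9 * c₀ * ρ ^ 3)
    (hBbd : ∀ k, ∀ᵐ x ∂P, |B k x| ≤ 4 * ρ ^ 2)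
    (hXbd : ∀ k, 1 ≤ k → ∀ᵐ x ∂P, |X k x| ≤ c₁ * σ)
    (hF : ∀ k, 1 ≤ k → ∀ᵐ x ∂P, |B k x - (F k x - F (k - 1) x) - ctilde| ≤ c₃ * σ)
    (hG : ∀ k, 1 ≤ k → ∀ᵐ x ∂P, |A k x - (G k x - G (k - 1) x) - ctilde| ≤ c₅ * σ)
    (hΔF : ∀ k, 1 ≤ k → ∀ᵐ x ∂P, |F k x - F (k - 1) x| ≤ c₂)
    (hΔG : ∀ k, 1 ≤ k → ∀ᵐ x ∂P, |G k x - G (k - 1) x| ≤ c₄)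
    (hδlow : 2 * σ / ctilde * (2 * κ / σ ^ 3 + c₃ + c₅
        + 2 * (3 * c₁ ^ 3 + (c₂ + c₄) ^ 2 / c₆ + 4 * c₁ * (c₂ + c₄))) ≤ δ)
    (hδhigh : δ ≤ 1 / 2) :
    ∀ k, 1 ≤ k →
      P[PiProc σ δ κ F G X (k + 1)|ℱ k] ≤ᵐ[P] PiProc σ δ κ F G X k := by
  have hκ0 : 0 ≤ κ := hκ.1
  intro k hk
  have hle : ℱ k ≤ m0 := ℱ.le k
  haveI : (MeasureTheory.ae P).NeBot := ae_neBot.mpr (IsProbabilityMeasure.ne_zero P)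
  have hQ : 0 ≤ (c₂+c₄)^2/c₆ := by positivity
  have hκσ : 0 ≤ 2*κ/σ^3 := div_nonneg (by linarith) (by positivity)
  have hc₇pos : 0 < 3*c₁^3 + (c₂+c₄)^2/c₆ + 4*c₁*(c₂+c₄) := by positivity
  have hδ0 : 0 < δ := by
    refine lt_of_lt_of_le ?_ hδlow
    have h1 : 0 < 2*σ/ctilde := by positivity
    have h2 : 0 < 2 * κ / σ ^ 3 + c₃ + c₅
        + 2 * (3 * c₁ ^ 3 + (c₂ + c₄) ^ 2 / c₆ + 4 * c₁ * (c₂ + c₄)) := by linarith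
    exact mul_pos h1 h2
  have hδ1 : δ ≤ 1 := by linarith
  have ht0 : (0:ℝ) ≤ 1 - δ := by linarith
  have hσ3 : (0:ℝ) < σ^3 := by positivity
  have h2σS : 2*σ*(2*κ/σ^3 + c₃ + c₅
      + 2*(3*c₁^3+(c₂+c₄)^2/c₆+4*c₁*(c₂+c₄))) ≤ δ*ctilde := by
    rw [div_mul_eq_mul_div, div_le_iff₀ hctilde] at hδlow
    linarith
  have hkk1 : 1 ≤ k + 1 := by omega
  have hAk := hcondA (k+1) hkk1
  have hBk := hcondB (k+1) hkk1
  simp only [Nat.add_sub_cancel] at hAk hBk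
  have hYbd : ∀ᵐ x ∂P, |X (k+1) x| ≤ c₁*σ := hXbd (k+1) hkk1
  -- Step A : c₁ σ ≤ 1/12
  have hY2bd : ∀ᵐ x ∂P, X (k+1) x^2 ≤ c₁^2*σ^2 := by
    filter_upwards [hYbd] with x hx
    have h1 : |X (k+1) x|^2 ≤ (c₁*σ)^2 := pow_le_pow_left₀ (abs_nonneg _) hx 2
    rw [sq_abs] at h1
    nlinarith
  have hAle : ∀ᵐ x ∂P, σ^2 * A k x ≤ c₁^2*σ^2 := by
    have h1 : P[(fun x => X (k+1) x^2)|ℱ k] ≤ᵐ[P] P[(fun _ => c₁^2*σ^2 : Ω → ℝ)|ℱ k] :=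
      condExp_mono (hXsqint (k+1) hkk1) (integrable_const _) hY2bd
    rw [condExp_const hle] at h1
    filter_upwards [h1, hAk] with x h1x h2x
    rw [← h2x]
    exact h1x
  obtain ⟨x₀, hx1, hx2, hx3⟩ := (hAle.and ((hG k hk).and (hΔG k hk))).exists
  have hct : ctilde ≤ c₁^2 + c₄ + c₅*σ := by
    have h2 := abs_le.mp hx2
    have h3 := abs_le.mp hx3
    have hA' : A k x₀ ≤ c₁^2 := by nlinarith [mul_pos hσ0 hσ0]
    linarith [h2.1, h2.2, h3.1, h3.2]
  have hε : c₁*σ ≤ 1/12 := by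
    have hδc : δ*ctilde ≤ ctilde/2 := by nlinarith
    have h8 : 24*(c₁*σ)*c₁^2 + 32*(c₁*σ)*c₄ ≤ c₁^2 + c₄ := by
      nlinarith [mul_pos hσ0 hc₃, mul_pos hσ0 hc₅, mul_nonneg hσ0.le hκσ,
        mul_nonneg hσ0.le hQ, mul_pos (mul_pos hσ0 hc₁) hc₂]
    by_contra hcon
    push_neg at hcon
    nlinarith [mul_pos (sub_pos.mpr hcon) (mul_pos hc₁ hc₁), mul_pos (sub_pos.mpr hcon) hc₄,
      mul_pos hc₁ hc₁]
  -- the key budget inequality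
  have hKey : κ*(1-δ) + (1-δ)*σ^3*c₃ + (1-δ)*σ^3*c₅ + 3*(c₁*σ)^3
      ≤ (1-δ)*σ^2*(ctilde*δ)/2 := by
    have hcoef : (0:ℝ) ≤ (1-δ)*σ^2/2 := by positivity
    have hmul := mul_le_mul_of_nonneg_right h2σS hcoef
    have hid : 2*σ*(2*κ/σ^3 + c₃+c₅+2*(3*c₁^3+(c₂+c₄)^2/c₆+4*c₁*(c₂+c₄))) * ((1-δ)*σ^2/2)
        = 2*(κ*(1-δ)) + (1-δ)*σ^3*c₃ + (1-δ)*σ^3*c₅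
          + 2*((1-δ)*(σ^3*(3*c₁^3+(c₂+c₄)^2/c₆+4*c₁*(c₂+c₄)))) := by
      field_simp
    rw [hid] at hmul
    have hwn : 0 ≤ κ*(1-δ) := mul_nonneg hκ0 ht0
    have hex : 3*(c₁*σ)^3 ≤ 2*((1-δ)*(σ^3*(3*c₁^3+(c₂+c₄)^2/c₆+4*c₁*(c₂+c₄)))) := by
      nlinarith [mul_nonneg hσ3.le hQ, mul_nonneg hσ3.le (by positivity : (0:ℝ) ≤ 4*c₁*(c₂+c₄)),
        mul_nonneg (mul_nonneg (show (0:ℝ) ≤ 1-2*δ by linarith) hσ3.le) hc₇pos.le]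
    nlinarith [hmul, hwn, hex]
  -- nonnegativity of PiProc k
  have hPinn : ∀ᵐ x ∂P, 0 ≤ PiProc σ δ κ F G X k x := by
    have hall : ∀ᵐ x ∂P, ∀ i, i ∈ Finset.Icc 1 k → |X i x| ≤ c₁*σ := by
      rw [ae_all_iff]
      intro i
      by_cases hi : i ∈ Finset.Icc 1 k
      · exact (hXbd i (Finset.mem_Icc.mp hi).1).mono fun x hx _ => hx
      · filter_upwards with x h
        exact absurd h hi
    filter_upwards [hall] with x hx
    unfold PiProc
    apply mul_nonneg (Real.exp_nonneg _)
    apply Finset.prod_nonneg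
    intro i hi
    apply Real.rpow_nonneg
    have := abs_le.mp (hx i hi)
    have h1 : (0:ℝ) ≤ 1 + X i x := by linarith
    exact mul_nonneg (Real.exp_nonneg _) h1
  -- measurability
  have hYmeas : Measurable (X (k+1)) := ((hXadp (k+1) hkk1).mono (ℱ.le (k+1))).measurable
  set g : Ω → ℝ := fun x => (1 + X (k+1) x) ^ (δ - 1) with hgdef
  have hgmeas : AEStronglyMeasurable g P := by
    apply Measurable.aestronglyMeasurable
    fun_prop
  have hgbd : ∀ᵐ x ∂P, 0 ≤ g x ∧ g x ≤ 2 := by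
    filter_upwards [hYbd] with x hx
    have hab := abs_le.mp hx
    have h1 : (11:ℝ)/12 ≤ 1 + X (k+1) x := by linarith
    have h0 : (0:ℝ) < 1 + X (k+1) x := by linarith
    constructor
    · exact Real.rpow_nonneg (by linarith) _
    · calc g x ≤ ((11:ℝ)/12) ^ (δ - 1) :=
          Real.rpow_le_rpow_of_nonpos (by norm_num) h1 (by linarith)
        _ ≤ ((11:ℝ)/12) ^ (-1 : ℝ) :=
          Real.rpow_le_rpow_of_exponent_ge (by norm_num) (by norm_num) (by linarith)
        _ ≤ 2 := by
          rw [Real.rpow_neg_one]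
          norm_num
  have hgint : Integrable g P := by
    refine (integrable_const (2:ℝ)).mono' hgmeas ?_
    filter_upwards [hgbd] with x hx
    rw [Real.norm_eq_abs, abs_of_nonneg hx.1]
    exact hx.2
  -- comparison function
  set f1 : Ω → ℝ := fun _ => 1 + 3*(c₁*σ)^3 with hf1def
  set f2 : Ω → ℝ := (-(1-δ)) • X (k+1) with hf2def
  set f3 : Ω → ℝ := ((1-δ)*(2-δ)/2) • (fun x => X (k+1) x^2) with hf3def
  have hint2 : Integrable f2 P := (hXint (k+1) hkk1).smul _
  have hint3 : Integrable f3 P := (hXsqint (k+1) hkk1).smul _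
  have hgh : g ≤ᵐ[P] f1 + f2 + f3 := by
    filter_upwards [hYbd] with x hx
    have hkp := key_pointwise (u := X (k+1) x) (δ := δ) (hx.trans hε) hδ0.le hδhigh
    have h3 : |X (k+1) x|^3 ≤ (c₁*σ)^3 := pow_le_pow_left₀ (abs_nonneg _) hx 3
    simp only [hgdef, hf1def, hf2def, hf3def, Pi.add_apply, Pi.smul_apply, smul_eq_mul]
    linarith
  have hhint : Integrable (f1 + f2 + f3) P := ((integrable_const _).add hint2).add hint3
  -- conditional expectation of the comparison function
  have hcondg : P[g|ℱ k] ≤ᵐ[P] fun x =>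
      (1 + 3*(c₁*σ)^3) + (-(1-δ))*(σ^2*B k x) + ((1-δ)*(2-δ)/2)*(σ^2*A k x) := by
    have hm := condExp_mono (m := ℱ k) hgint hhint hgh
    have e0 : P[f1 + f2 + f3|ℱ k] =ᵐ[P] P[f1 + f2|ℱ k] + P[f3|ℱ k] :=
      condExp_add ((integrable_const _).add hint2) hint3 (ℱ k)
    have e1 : P[f1 + f2|ℱ k] =ᵐ[P] P[f1|ℱ k] + P[f2|ℱ k] :=
      condExp_add (integrable_const _) hint2 (ℱ k)
    have e2 : P[f1|ℱ k] = f1 := condExp_const hle _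
    have e3 : P[f2|ℱ k] =ᵐ[P] (-(1-δ)) • P[X (k+1)|ℱ k] := condExp_smul _ _ (ℱ k)
    have e4 : P[f3|ℱ k] =ᵐ[P] ((1-δ)*(2-δ)/2) • P[(fun x => X (k+1) x^2)|ℱ k] := condExp_smul _ _ (ℱ k)
    filter_upwards [hm, e0, e1, e3, e4, hBk, hAk] with x hmx he0 he1 he3 he4 hbx hax
    have he2x := congrFun e2 x
    simp only [Pi.add_apply, Pi.smul_apply, smul_eq_mul] at he0 he1 he3 he4 hmx
    rw [he0, he1, he3, he4, he2x, hbx, hax] at hmx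
    exact hmx
  -- the ℱ k-measurable multiplier
  set q : Ω → ℝ := fun x => Real.exp (σ^2*(1-δ)*((F k x - F (k-1) x)
      - (1-δ/2)*(G k x - G (k-1) x))) * Real.exp (κ*(1-δ)) with hqdef
  set W : Ω → ℝ := fun x => PiProc σ δ κ F G X k x * q x with hWdef
  have hFkm : Measurable[ℱ k] (F k) := (hFadp k).measurable
  have hGkm : Measurable[ℱ k] (G k) := (hGadp k).measurable
  have hFk1m : Measurable[ℱ k] (F (k-1)) := ((hFadp (k-1)).mono (ℱ.mono (Nat.sub_le k 1))).measurable
  have hGk1m : Measurable[ℱ k] (G (k-1)) := ((hGadp (k-1)).mono (ℱ.mono (Nat.sub_le k 1))).measurable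
  have hPim : Measurable[ℱ k] (PiProc σ δ κ F G X k) := by
    apply Measurable.mul
    · exact Real.measurable_exp.comp
        (measurable_const.mul (hFk1m.sub (measurable_const.mul hGk1m)))
    · apply Finset.measurable_prod
      intro i hi
      have hXi : Measurable[ℱ k] (X i) :=
        ((hXadp i (Finset.mem_Icc.mp hi).1).mono (ℱ.mono (Finset.mem_Icc.mp hi).2)).measurable
      fun_prop
  have hWmeas : StronglyMeasurable[ℱ k] W := by
    apply Measurable.stronglyMeasurable
    apply hPim.mul
    apply Measurable.mul _ measurable_const
    exact Real.measurable_exp.comp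
      (measurable_const.mul ((hFkm.sub hFk1m).sub (measurable_const.mul (hGkm.sub hGk1m))))
  -- decomposition of PiProc (k+1)
  have hsplit : PiProc σ δ κ F G X (k+1) =ᵐ[P] W * g := by
    filter_upwards [hYbd] with x hx
    have hab := abs_le.mp hx
    have h1Y : (0:ℝ) ≤ 1 + X (k+1) x := by linarith
    show PiProc σ δ κ F G X (k+1) x = W x * g x
    rw [hWdef, hqdef, hgdef]
    unfold PiProc
    rw [Nat.add_sub_cancel]
    rw [Finset.prod_Icc_succ_top (by omega : 1 ≤ k+1)]
    rw [Real.mul_rpow (Real.exp_nonneg _) h1Y]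
    rw [show Real.exp (-κ) ^ (δ-1) = Real.exp (κ*(1-δ)) by
      rw [← Real.exp_mul]; ring_nf]
    rw [show σ^2*(1-δ)*(F k x - (1-δ/2)*G k x)
        = σ^2*(1-δ)*(F (k-1) x - (1-δ/2)*G (k-1) x)
          + σ^2*(1-δ)*((F k x - F (k-1) x) - (1-δ/2)*(G k x - G (k-1) x)) by ring]
    rw [Real.exp_add]
    ring
  -- case split on integrability
  by_cases hPint : Integrable (PiProc σ δ κ F G X (k + 1)) P
  · have hWg_int : Integrable (W * g) P := hPint.congr hsplit
    have hpull := condExp_mul_of_stronglyMeasurable_left hWmeas hWg_int hgint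
    have hchain : P[PiProc σ δ κ F G X (k+1)|ℱ k] =ᵐ[P] W * P[g|ℱ k] :=
      (condExp_congr_ae hsplit).trans hpull
    filter_upwards [hchain, hcondg, hPinn, hF k hk, hG k hk] with x hcx hgx hpx he1 he2
    have hq0 : 0 < q x := by
      rw [hqdef]
      positivity
    have hW0 : 0 ≤ W x := by
      rw [hWdef]
      exact mul_nonneg hpx hq0.le
    set M : ℝ := (1 + 3*(c₁*σ)^3) + (-(1-δ))*(σ^2*B k x) + ((1-δ)*(2-δ)/2)*(σ^2*A k x) with hMdef
    have harg : M ≤ Real.exp (-(σ^2*(1-δ)*((F k x - F (k-1) x)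
        - (1-δ/2)*(G k x - G (k-1) x)) + κ*(1-δ))) := by
      refine le_trans ?_ (Real.add_one_le_exp _)
      have e1b := abs_le.mp he1
      have e2b := abs_le.mp he2
      have hb1 : -((1-δ)*σ^2*(B k x - (F k x - F (k-1) x) - ctilde)) ≤ (1-δ)*σ^3*c₃ := by
        have hcoe : (0:ℝ) ≤ (1-δ)*σ^2 := by positivity
        have := mul_le_mul_of_nonneg_left
          (show -(B k x - (F k x - F (k-1) x) - ctilde) ≤ c₃*σ by linarith [e1b.1]) hcoe
        linarith [this]
      have hb2 : (1-δ)*(1-δ/2)*σ^2*(A k x - (G k x - G (k-1) x) - ctilde)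
          ≤ (1-δ)*σ^3*c₅ := by
        have hcoe : (0:ℝ) ≤ (1-δ)*(1-δ/2)*σ^2 := by
          have : (0:ℝ) ≤ 1-δ/2 := by linarith
          positivity
        have h1 := mul_le_mul_of_nonneg_left e2b.2 hcoe
        have h2 : (1-δ)*(1-δ/2)*σ^2*(c₅*σ) ≤ (1-δ)*σ^3*c₅ := by
          have h3 := mul_nonneg (mul_nonneg (mul_nonneg hδ0.le ht0) hσ3.le) hc₅.le
          linarith [h3]
        linarith
      rw [hMdef]
      linarith [hb1, hb2, hKey]
    have hqM : q x * M ≤ 1 := by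
      have := mul_le_mul_of_nonneg_left harg hq0.le
      refine le_trans this ?_
      simp only [hqdef]
      rw [← Real.exp_add, ← Real.exp_add]
      rw [show σ^2*(1-δ)*((F k x - F (k-1) x) - (1-δ/2)*(G k x - G (k-1) x)) + κ*(1-δ)
          + -(σ^2*(1-δ)*((F k x - F (k-1) x) - (1-δ/2)*(G k x - G (k-1) x)) + κ*(1-δ)) = 0
        by ring]
      rw [Real.exp_zero]
    calc (P[PiProc σ δ κ F G X (k+1)|ℱ k]) x = W x * (P[g|ℱ k]) x := hcx
      _ ≤ W x * M := mul_le_mul_of_nonneg_left hgx hW0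
      _ = PiProc σ δ κ F G X k x * (q x * M) := by rw [hWdef]; ring
      _ ≤ PiProc σ δ κ F G X k x * 1 := mul_le_mul_of_nonneg_left hqM hpx
      _ = PiProc σ δ κ F G X k x := mul_one _
  · rw [condExp_of_not_integrable hPint]
    filter_upwards [hPinn] with x hx
    simpa using hx
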